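/- arXiv:2408.03184 — 4 statements merged into one kernel-verified Lean document; each statement's English description precedes it below -/
import Mathlib

section
/- Let a, b be integers with a > 1, b > 1, and gcd(a, b) = 1. Then there exist infinitely many primes p such that a divides p - 1 with gcd(a, (p-1)/a) = 1, and b divides p + 1 with gcd(b, (p+1)/b) = 1. -/
theorem infinite_primes_hall_divisor (a b : ℕ) (ha : 1 < a) (hb : 1 < b)
    (hab : Nat.Coprime a b) :
    {p : ℕ | p.Prime ∧ a ∣ (p - 1) ∧ Nat.Coprime a ((p - 1) / a) ∧
      b ∣ (p + 1) ∧ Nat.Coprime b ((p + 1) / b)}.Infinite := by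
  have ha0 : 0 < a := by omega
  have hb0 : 0 < b := by omega
  have hcop : (a ^ 2).Coprime (b ^ 2) := (hab.pow_right 2).pow_left 2
  obtain ⟨r, hr1, hr2⟩ := Nat.chineseRemainder hcop (a + 1) (b - 1)
  set q : ℕ := a ^ 2 * b ^ 2 with hq
  have hq0 : 0 < q := by positivity
  haveI : NeZero q := ⟨hq0.ne'⟩
  -- r is coprime to q
  have hcr1 : Nat.Coprime r (a ^ 2) := by
    have hca : Nat.Coprime (a + 1) a := Nat.coprime_self_add_left.2 (Nat.coprime_one_left a)
    have h1 : Nat.Coprime (a + 1) (a ^ 2) := hca.pow_right 2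
    rw [Nat.Coprime, Nat.gcd_comm, Nat.gcd_rec, hr1]
    rw [Nat.Coprime, Nat.gcd_comm, Nat.gcd_rec] at h1
    exact h1
  have hcr2 : Nat.Coprime r (b ^ 2) := by
    have h1 : Nat.Coprime (b - 1) (b ^ 2) := by
      have : Nat.Coprime (b - 1) b := by
        have h := (Nat.coprime_self_add_right (m := b - 1) (n := 1)).2
          (Nat.coprime_one_right _)
        rwa [Nat.sub_add_cancel hb.le] at h
      exact this.pow_right 2
    rw [Nat.Coprime, Nat.gcd_comm, Nat.gcd_rec, hr2]
    rw [Nat.Coprime, Nat.gcd_comm, Nat.gcd_rec] at h1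
    exact h1
  have hrq : Nat.Coprime r q := Nat.Coprime.mul_right hcr1 hcr2
  have hunit : IsUnit ((r : ZMod q)) := (ZMod.isUnit_iff_coprime r q).2 hrq
  have hinf := Nat.infinite_setOfPred_prime_and_eq_mod (q := q) hunit
  have hinf2 : ({p : ℕ | p.Prime ∧ (p : ZMod q) = (r : ZMod q)} \ {p | p ≤ q}).Infinite :=
    hinf.diff (Set.finite_le_nat q)
  refine hinf2.mono ?_
  rintro p ⟨⟨hp, hpr⟩, hpq⟩
  simp only [Set.mem_setOf_eq, not_le] at hpq
  have hpm : p ≡ r [MOD q] := (ZMod.natCast_eq_natCast_iff _ _ _).1 hpr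
  have hpa : p ≡ a + 1 [MOD a ^ 2] := (hpm.of_dvd (Dvd.intro _ rfl)).trans hr1
  have hpb : p ≡ b - 1 [MOD b ^ 2] := (hpm.of_dvd (Dvd.intro_left _ rfl)).trans hr2
  have hqa : a + 1 ≤ q := by
    have h1 : a + 1 ≤ a ^ 2 := by nlinarith
    have h2 : a ^ 2 ≤ q := Nat.le_mul_of_pos_right _ (by positivity)
    omega
  have hqb : b + 1 ≤ q := by
    have h1 : b + 1 ≤ b ^ 2 := by nlinarith
    have h2 : b ^ 2 ≤ q := Nat.le_mul_of_pos_left _ (by positivity)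
    omega
  have hpgt : a + 1 < p := lt_of_le_of_lt hqa hpq
  have hpgtb : b + 1 < p := lt_of_le_of_lt hqb hpq
  have hda : a ^ 2 ∣ p - (a + 1) := (Nat.modEq_iff_dvd' hpgt.le).1 hpa.symm
  obtain ⟨k, hk⟩ := hda
  have hdb : b ^ 2 ∣ p - (b - 1) := (Nat.modEq_iff_dvd' (by omega)).1 hpb.symm
  obtain ⟨l, hl⟩ := hdb
  have hp1 : p - 1 = a * (1 + a * k) := by
    have h : p - 1 = a + a ^ 2 * k := by omega
    rw [h]; ring
  have hp2 : p + 1 = b * (1 + b * l) := by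
    have h : p + 1 = b + b ^ 2 * l := by omega
    rw [h]; ring
  refine ⟨hp, ⟨1 + a * k, hp1⟩, ?_, ⟨1 + b * l, hp2⟩, ?_⟩
  · rw [hp1, Nat.mul_div_cancel_left _ ha0]
    exact (Nat.coprime_add_mul_left_right a 1 k).2 (Nat.coprime_one_right a)
  · rw [hp2, Nat.mul_div_cancel_left _ hb0]
    exact (Nat.coprime_add_mul_left_right b 1 l).2 (Nat.coprime_one_right b)
end

section
/- Let m ≥ 2 be a positive integer and ξ an integer with gcd(ξ, m) = 1. Then there exist infinitely many primes p such that p ≡ ξ (mod m) and gcd(m, (p - ξ)/m) = 1. -/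
theorem infinite_primes_cong_with_coprime_quotient (m : ℕ) (hm : 2 ≤ m) (ξ : ℤ)
    (hξ : IsCoprime ξ (m : ℤ)) :
    {p : ℕ | p.Prime ∧ ∃ x : ℤ, (p : ℤ) - ξ = (m : ℤ) * x ∧ IsCoprime (m : ℤ) x}.Infinite := by
  have hm0 : m ^ 2 ≠ 0 := by positivity
  haveI : NeZero (m ^ 2) := ⟨hm0⟩
  -- coprimality of ξ + m with m^2
  have hc : IsCoprime (ξ + (m : ℤ)) ((m : ℤ) ^ 2) := by
    have h1 : IsCoprime (ξ + (m : ℤ)) (m : ℤ) := by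
      have := hξ.add_mul_right_left 1
      simpa using this
    exact h1.pow_right
  -- the cast of ξ + m to ZMod (m^2) is a unit
  have hu : IsUnit (((ξ + (m : ℤ)) : ℤ) : ZMod (m ^ 2)) := by
    obtain ⟨u, v, huv⟩ := hc
    refine IsUnit.of_mul_eq_one ((u : ℤ) : ZMod (m ^ 2)) ?_
    have : (((u * (ξ + (m : ℤ)) + v * (m : ℤ) ^ 2) : ℤ) : ZMod (m ^ 2)) = ((1 : ℤ) : ZMod (m ^ 2)) := by
      rw [huv]
    push_cast at this
    have hz : ((m : ZMod (m ^ 2))) ^ 2 = 0 := by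
      rw [← Nat.cast_pow, ZMod.natCast_self]
    rw [hz] at this
    rw [mul_comm]
    push_cast
    simpa using this
  have hdir := Nat.infinite_setOfPred_prime_and_eq_mod (q := m ^ 2) hu
  refine hdir.mono ?_
  rintro p ⟨hp, heq⟩
  refine ⟨hp, ?_⟩
  have hdvd : ((m : ℤ) ^ 2) ∣ (p : ℤ) - (ξ + (m : ℤ)) := by
    have : (((p : ℤ) - (ξ + (m : ℤ)) : ℤ) : ZMod (m ^ 2)) = 0 := by
      push_cast
      rw [heq]
      push_cast
      ring
    have := (ZMod.intCast_zmod_eq_zero_iff_dvd _ _).mp this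
    exact_mod_cast this
  obtain ⟨k, hk⟩ := hdvd
  refine ⟨1 + m * k, by linarith [hk], ⟨-k, 1, by ring⟩⟩
end

section
/- For an odd integer q with q > 3, the number 24 is a Hall divisor of (q² - 1)/2 if and only if q² ≡ 49 (mod 288) or q² ≡ 241 (mod 288). -/
lemma cop24 (m : ℕ) : Nat.Coprime 24 m ↔
    (m % 24 = 1 ∨ m % 24 = 5 ∨ m % 24 = 7 ∨ m % 24 = 11 ∨
     m % 24 = 13 ∨ m % 24 = 17 ∨ m % 24 = 19 ∨ m % 24 = 23) := by
  rw [Nat.Coprime, Nat.gcd_rec]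
  have h : m % 24 < 24 := Nat.mod_lt m (by norm_num)
  generalize m % 24 = r at *
  interval_cases r <;> simp

theorem hall_divisor_24_iff (q : ℕ) (hq : Odd q) (hq3 : 3 < q) :
    (24 ∣ (q ^ 2 - 1) / 2 ∧ Nat.Coprime 24 (((q ^ 2 - 1) / 2) / 24)) ↔
      (q ^ 2 % 288 = 49 ∨ q ^ 2 % 288 = 241) := by
  obtain ⟨k, hk⟩ := hq
  obtain ⟨m, hm⟩ := Nat.even_mul_succ_self k
  have hsq : q ^ 2 = 8 * m + 1 := by
    subst hk
    have h1 : (2 * k + 1) ^ 2 = 4 * (k * (k + 1)) + 1 := by ring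
    rw [h1, hm]; ring
  rw [hsq, cop24]
  omega
end

section
/- For an odd integer q with q > 5, the number 60 is a Hall divisor of (q² - 1)/2 if and only if q² ≡ 120k + 1 (mod 3600) for some k ∈ {1, 7, 11, 13, 17, 19, 23, 29}. -/
set_option maxHeartbeats 1000000

private lemma key_aux (t : ℕ) (ht : t < 3600) (ht2 : t % 2 = 1) :
    (60 ∣ (t - 1) / 2 ∧ ¬(120 ∣ (t - 1) / 2) ∧ ¬(180 ∣ (t - 1) / 2) ∧
        ¬(300 ∣ (t - 1) / 2)) ↔
      (t = 121 ∨ t = 841 ∨ t = 1321 ∨ t = 1561 ∨ t = 2041 ∨ t = 2281 ∨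
        t = 2761 ∨ t = 3481) := by
  obtain ⟨r, hr, hrlt⟩ : ∃ r : ℕ, t = 2 * r + 1 ∧ r < 1800 :=
    ⟨(t - 1) / 2, by omega, by omega⟩
  have hreq : (t - 1) / 2 = r := by omega
  rw [hreq]
  have hA : (60 ∣ r ∧ ¬(120 ∣ r) ∧ ¬(180 ∣ r) ∧ ¬(300 ∣ r)) ↔
      (r % 8 = 4 ∧ (r % 9 = 3 ∨ r % 9 = 6) ∧
        (r % 25 = 5 ∨ r % 25 = 10 ∨ r % 25 = 15 ∨ r % 25 = 20)) := by
    omega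
  rw [hA]
  constructor
  · rintro ⟨h8, h9 | h9, h25 | h25 | h25 | h25⟩ <;> omega
  · intro h
    omega

private lemma lhs_aux (n : ℕ) :
    (60 ∣ n ∧ Nat.Coprime 60 (n / 60)) ↔
      (60 ∣ n ∧ ¬(120 ∣ n) ∧ ¬(180 ∣ n) ∧ ¬(300 ∣ n)) := by
  have hco : ∀ m : ℕ, Nat.Coprime 60 m ↔ ¬(2 ∣ m) ∧ ¬(3 ∣ m) ∧ ¬(5 ∣ m) := by
    intro m
    rw [show (60 : ℕ) = 2 * (2 * (3 * 5)) by norm_num, Nat.coprime_mul_iff_left,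
      Nat.coprime_mul_iff_left, Nat.coprime_mul_iff_left,
      Nat.Prime.coprime_iff_not_dvd (by norm_num),
      Nat.Prime.coprime_iff_not_dvd (by norm_num),
      Nat.Prime.coprime_iff_not_dvd (by norm_num)]
    tauto
  constructor
  · rintro ⟨h1, h2⟩
    rw [hco] at h2
    obtain ⟨a, b, c⟩ := h2
    rw [Nat.dvd_div_iff_mul_dvd h1] at a b c
    norm_num at a b c
    exact ⟨h1, a, b, c⟩
  · rintro ⟨h1, a, b, c⟩
    refine ⟨h1, (hco _).mpr ⟨?_, ?_, ?_⟩⟩ <;>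
      rw [Nat.dvd_div_iff_mul_dvd h1] <;> norm_num <;> assumption

private lemma main_aux (x : ℕ) (hx : x % 2 = 1) :
    (60 ∣ (x - 1) / 2 ∧ ¬(120 ∣ (x - 1) / 2) ∧ ¬(180 ∣ (x - 1) / 2) ∧
        ¬(300 ∣ (x - 1) / 2)) ↔
      (x % 3600 = 121 ∨ x % 3600 = 841 ∨ x % 3600 = 1321 ∨ x % 3600 = 1561 ∨
        x % 3600 = 2041 ∨ x % 3600 = 2281 ∨ x % 3600 = 2761 ∨ x % 3600 = 3481) := by
  have e60 : (60 ∣ (x - 1) / 2) ↔ 60 ∣ (x % 3600 - 1) / 2 := by omega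
  have e120 : (120 ∣ (x - 1) / 2) ↔ 120 ∣ (x % 3600 - 1) / 2 := by omega
  have e180 : (180 ∣ (x - 1) / 2) ↔ 180 ∣ (x % 3600 - 1) / 2 := by omega
  have e300 : (300 ∣ (x - 1) / 2) ↔ 300 ∣ (x % 3600 - 1) / 2 := by omega
  rw [e60, e120, e180, e300]
  exact key_aux (x % 3600) (Nat.mod_lt _ (by norm_num)) (by omega)

private lemma rhs_aux (s : ℕ) :
    (∃ k ∈ ({1, 7, 11, 13, 17, 19, 23, 29} : Finset ℕ), s = (120 * k + 1) % 3600) ↔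
      (s = 121 ∨ s = 841 ∨ s = 1321 ∨ s = 1561 ∨ s = 2041 ∨ s = 2281 ∨
        s = 2761 ∨ s = 3481) := by
  simp only [Finset.mem_insert, Finset.mem_singleton]
  constructor
  · rintro ⟨k, hk, h⟩
    rcases hk with rfl | rfl | rfl | rfl | rfl | rfl | rfl | rfl <;> norm_num at h <;> tauto
  · rintro (h | h | h | h | h | h | h | h)
    exacts [⟨1, by norm_num, by rw [h]⟩, ⟨7, by norm_num, by rw [h]⟩,
      ⟨11, by norm_num, by rw [h]⟩, ⟨13, by norm_num, by rw [h]⟩,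
      ⟨17, by norm_num, by rw [h]⟩, ⟨19, by norm_num, by rw [h]⟩,
      ⟨23, by norm_num, by rw [h]⟩, ⟨29, by norm_num, by rw [h]⟩]

theorem hall_divisor_60_iff (q : ℕ) (hq : Odd q) (hq5 : 5 < q) :
    (60 ∣ (q ^ 2 - 1) / 2 ∧ Nat.Coprime 60 (((q ^ 2 - 1) / 2) / 60)) ↔
      (∃ k ∈ ({1, 7, 11, 13, 17, 19, 23, 29} : Finset ℕ),
        q ^ 2 % 3600 = (120 * k + 1) % 3600) := by
  have hq2 : q ^ 2 % 2 = 1 := by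
    rw [Nat.pow_mod, Nat.odd_iff.mp hq]
  rw [lhs_aux, main_aux (q ^ 2) hq2, rhs_aux]
end
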